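/- arXiv:math/9701202 — 8 statements merged into one kernel-verified Lean document; each statement's English description precedes it below -/
import Mathlib

section
/- The set X is invariant under the action of G on L(G,d)^{ℚ^{<ℕ}}: if f⃗ ∈ X and g ∈ G then g·f⃗ ∈ X. -/
open Set Topology

/-- `d` is a metric on the group `G` which is right-invariant, bounded by `1`,
and compatible with the topology of `G` (the `d`-balls around each point form a
neighbourhood basis). -/
def IsRightInvariantCompatibleMetric {G : Type*} [Group G] [TopologicalSpace G]
    (d : G → G → ℝ) : Prop :=
  (∀ g h, d g h = d h g) ∧
  (∀ g h, d g h = 0 ↔ g = h) ∧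
  (∀ g h k, d g k ≤ d g h + d h k) ∧
  (∀ g h k, d (g * k) (h * k) = d g h) ∧
  (∀ g h, d g h ≤ 1) ∧
  (∀ x : G, (nhds x).HasBasis (fun ε : ℝ => 0 < ε) (fun ε => {y | d x y < ε}))

/-- `L(G,d)`: the set of functions `f : G → [0,1]` with
`|f g₁ - f g₂| ≤ d g₁ g₂` for all `g₁ g₂`. -/
def LGd {G : Type*} (d : G → G → ℝ) : Set (G → ℝ) :=
  {f | (∀ g, f g ∈ Icc (0 : ℝ) 1) ∧ ∀ g₁ g₂, |f g₁ - f g₂| ≤ d g₁ g₂}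

/-- The sequence `s q₀ q₁ q₂ 0 m n`. -/
def seqT (s : List ℚ) (q₀ q₁ q₂ : ℚ) (m n : ℕ) : List ℚ :=
  s ++ [q₀, q₁, q₂, 0, (m : ℚ), (n : ℚ)]

/-- The sequence `s q₀ q₁ q₂ 1 m n`. -/
def seqU (s : List ℚ) (q₀ q₁ q₂ : ℚ) (m n : ℕ) : List ℚ :=
  s ++ [q₀, q₁, q₂, 1, (m : ℚ), (n : ℚ)]

/-- Condition (1), with `g₀` ranging over the set `S`:
for `t = s q₀ q₁ q₂ 0 m n`, `f_t(g₀) < q₁ - ε` or `f_s(g₀) ≤ q₀ + ε`. -/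
def Cond1 {G : Type*} (f : List ℚ → G → ℝ) (S : Set G) : Prop :=
  ∀ (s : List ℚ), ∀ g₀ ∈ S, ∀ (m n : ℕ) (q₀ q₁ q₂ ε : ℚ),
    q₀ ∈ Ioo (0 : ℚ) 1 → q₁ ∈ Ioo (0 : ℚ) 1 → q₂ ∈ Ioo (0 : ℚ) 1 → ε ∈ Ioo (0 : ℚ) 1 →
    0 < q₀ - ε → q₀ + ε < 1 → 0 < q₁ - ε → q₁ + ε < 1 → 0 < q₂ - ε → q₂ + ε < 1 →
    (f (seqT s q₀ q₁ q₂ m n) g₀ < (q₁ : ℝ) - (ε : ℝ) ∨ f s g₀ ≤ (q₀ : ℝ) + (ε : ℝ))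

/-- Condition (2), with `g₀` ranging over the set `S`:
for `t = s q₀ q₁ q₂ 0 m n` and `u = s q₀ q₁ q₂ 1 m n`,
`f_u(g₀) ≥ q₂ + ε` or `f_t(g₀) ≥ q₁ - ε`. -/
def Cond2 {G : Type*} (f : List ℚ → G → ℝ) (S : Set G) : Prop :=
  ∀ (s : List ℚ), ∀ g₀ ∈ S, ∀ (m n : ℕ) (q₀ q₁ q₂ ε : ℚ),
    q₀ ∈ Ioo (0 : ℚ) 1 → q₁ ∈ Ioo (0 : ℚ) 1 → q₂ ∈ Ioo (0 : ℚ) 1 → ε ∈ Ioo (0 : ℚ) 1 →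
    0 < q₀ - ε → q₀ + ε < 1 → 0 < q₁ - ε → q₁ + ε < 1 → 0 < q₂ - ε → q₂ + ε < 1 →
    ((q₂ : ℝ) + (ε : ℝ) ≤ f (seqU s q₀ q₁ q₂ m n) g₀ ∨
      (q₁ : ℝ) - (ε : ℝ) ≤ f (seqT s q₀ q₁ q₂ m n) g₀)

/-- Condition (3), with `g₀` ranging over the set `S` and the witness `g₁`
ranging over the set `T`: if `f_s(g₀) < q₀` then there are `0 < q₂ < q₁ < q₀`,
`g₁ ∈ T` with `d(g₀,g₁) < ε`, and `m, n` such that `f_u(g₁) < q₂` for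
`u = s q₀ q₁ q₂ 1 m n`. -/
def Cond3 {G : Type*} (d : G → G → ℝ) (f : List ℚ → G → ℝ) (S T : Set G) : Prop :=
  ∀ (s : List ℚ), ∀ g₀ ∈ S, ∀ q₀ ∈ Ioo (0 : ℚ) 1, ∀ ε ∈ Ioo (0 : ℚ) 1,
    f s g₀ < (q₀ : ℝ) →
    ∃ (q₁ q₂ : ℚ) (g₁ : G) (m n : ℕ),
      g₁ ∈ T ∧ 0 < q₂ ∧ q₂ < q₁ ∧ q₁ < q₀ ∧ d g₀ g₁ < (ε : ℝ) ∧
      f (seqU s q₀ q₁ q₂ m n) g₁ < (q₂ : ℝ)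

/-- Hjorth's set `X ⊆ L(G,d)^{ℚ^{<ℕ}}`: the elements `f⃗` all of whose
coordinates lie in `L(G,d)` and which satisfy conditions (1), (2), (3) with
respect to the countable dense subgroup `G₀`. -/
def HjorthX {G : Type*} [Group G] (d : G → G → ℝ) (G₀ : Subgroup G) :
    Set (List ℚ → G → ℝ) :=
  {f | (∀ s, f s ∈ LGd d) ∧ Cond1 f (G₀ : Set G) ∧ Cond2 f (G₀ : Set G) ∧
    Cond3 d f (G₀ : Set G) (G₀ : Set G)}

/-- The topology `τ` on `X`, generated by the subbasic sets
`{f⃗ ∈ X : f_s(g₀) < q₀}` for `s ∈ ℚ^{<ℕ}`, `g₀ ∈ G₀`, `q₀ ∈ ℚ`. -/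
def hjorthTau {G : Type*} [Group G] (d : G → G → ℝ) (G₀ : Subgroup G) :
    TopologicalSpace ↥(HjorthX d G₀) :=
  TopologicalSpace.generateFrom
    {U | ∃ (s : List ℚ) (g₀ : G) (q₀ : ℚ), g₀ ∈ G₀ ∧
      U = {f : ↥(HjorthX d G₀) | f.1 s g₀ < (q₀ : ℝ)}}

/-- The set `X` is invariant under the `G`-action on `L(G,d)^{ℚ^{<ℕ}}` given by
`(g · f⃗)_s(g₀) = f_s(g₀ g)`: if `f⃗ ∈ X` and `g ∈ G`, then `g · f⃗ ∈ X`. -/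
theorem hjorthX_invariant {G : Type*} [Group G] [TopologicalSpace G]
    [IsTopologicalGroup G] [PolishSpace G]
    (d : G → G → ℝ) (hd : IsRightInvariantCompatibleMetric d)
    (G₀ : Subgroup G) (hG₀count : (G₀ : Set G).Countable) (hG₀dense : Dense (G₀ : Set G))
    (f : List ℚ → G → ℝ) (hf : f ∈ HjorthX d G₀) (g : G) :
    (fun s g₀ => f s (g₀ * g)) ∈ HjorthX d G₀ := by
  obtain ⟨dsymm, dzero, dtri, dinv, dbd, dbasis⟩ := hd
  obtain ⟨hL, h1, h2, h3⟩ := hf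
  have lip : ∀ (s : List ℚ) (a b : G), |f s a - f s b| ≤ d a b := fun s => (hL s).2
  -- density of G₀ in the d-balls
  have ball : ∀ (x : G) (r : ℝ), 0 < r → ∃ g' ∈ (G₀ : Set G), d x g' < r := by
    intro x r hr
    have hnb : {y | d x y < r} ∈ nhds x := (dbasis x).mem_of_mem hr
    have := mem_closure_iff_nhds.mp (hG₀dense x) _ hnb
    obtain ⟨y, hy1, hy2⟩ := this
    exact ⟨y, hy2, hy1⟩
  refine ⟨?_, ?_, ?_, ?_⟩
  · intro s
    refine ⟨fun g₀ => (hL s).1 _, fun g₁ g₂ => ?_⟩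
    calc |f s (g₁ * g) - f s (g₂ * g)| ≤ d (g₁ * g) (g₂ * g) := lip s _ _
      _ = d g₁ g₂ := dinv g₁ g₂ g
  · -- Cond1
    intro s g₀ hg₀ m n q₀ q₁ q₂ ε hq₀ hq₁ hq₂ hε ha1 ha2 ha3 ha4 ha5 ha6
    by_contra hcon
    push_neg at hcon
    obtain ⟨hT, hS⟩ := hcon
    -- choose a small rational δ
    have hgap : (0 : ℝ) < (f s (g₀ * g) - ((q₀ : ℝ) + ε)) / 2 := by linarith
    set r : ℝ := min (min ((q₀ : ℝ) - ε) (min ((q₁ : ℝ) - ε) ((q₂ : ℝ) - ε)))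
        (min (min (1 - (q₀ : ℝ) - ε) (min (1 - (q₁ : ℝ) - ε) (1 - (q₂ : ℝ) - ε)))
          ((f s (g₀ * g) - ((q₀ : ℝ) + ε)) / 2)) with hrdef
    have hr : 0 < r := by
      have c1 : (0 : ℝ) < (q₀ : ℝ) - ε := by exact_mod_cast ha1
      have c2 : (0 : ℝ) < (q₁ : ℝ) - ε := by exact_mod_cast ha3
      have c3 : (0 : ℝ) < (q₂ : ℝ) - ε := by exact_mod_cast ha5
      have c4 : (q₀ : ℝ) + ε < 1 := by exact_mod_cast ha2
      have c5 : (q₁ : ℝ) + ε < 1 := by exact_mod_cast ha4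
      have c6 : (q₂ : ℝ) + ε < 1 := by exact_mod_cast ha6
      simp only [hrdef, lt_min_iff]
      refine ⟨⟨c1, c2, c3⟩, ⟨by linarith, by linarith, by linarith⟩, hgap⟩
    obtain ⟨δ, hδ0, hδr⟩ := exists_rat_btwn hr
    have hδ0' : (0 : ℚ) < δ := by exact_mod_cast hδ0
    obtain ⟨g₀', hg₀'mem, hg₀'d⟩ := ball (g₀ * g) δ hδ0
    have hδ1 : (δ : ℝ) < (q₀ : ℝ) - ε := lt_of_lt_of_le hδr (le_trans (min_le_left _ _) (min_le_left _ _))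
    have hδ2 : (δ : ℝ) < (q₁ : ℝ) - ε := lt_of_lt_of_le hδr (le_trans (min_le_left _ _) (le_trans (min_le_right _ _) (min_le_left _ _)))
    have hδ3 : (δ : ℝ) < (q₂ : ℝ) - ε := lt_of_lt_of_le hδr (le_trans (min_le_left _ _) (le_trans (min_le_right _ _) (min_le_right _ _)))
    have hδ4 : (δ : ℝ) < 1 - (q₀ : ℝ) - ε := lt_of_lt_of_le hδr (le_trans (min_le_right _ _) (le_trans (min_le_left _ _) (min_le_left _ _)))
    have hδ5 : (δ : ℝ) < 1 - (q₁ : ℝ) - ε := lt_of_lt_of_le hδr (le_trans (min_le_right _ _) (le_trans (min_le_left _ _) (le_trans (min_le_right _ _) (min_le_left _ _))))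
    have hδ6 : (δ : ℝ) < 1 - (q₂ : ℝ) - ε := lt_of_lt_of_le hδr (le_trans (min_le_right _ _) (le_trans (min_le_left _ _) (le_trans (min_le_right _ _) (min_le_right _ _))))
    have hδ7 : (δ : ℝ) < (f s (g₀ * g) - ((q₀ : ℝ) + ε)) / 2 := lt_of_lt_of_le hδr (le_trans (min_le_right _ _) (min_le_right _ _))
    have hq1 : δ < q₀ - ε := by exact_mod_cast hδ1
    have hq2 : δ < q₁ - ε := by exact_mod_cast hδ2
    have hq3 : δ < q₂ - ε := by exact_mod_cast hδ3
    have hq4 : δ < 1 - q₀ - ε := by exact_mod_cast hδ4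
    have hq5 : δ < 1 - q₁ - ε := by exact_mod_cast hδ5
    have hq6 : δ < 1 - q₂ - ε := by exact_mod_cast hδ6
    have key := h1 s g₀' hg₀'mem m n q₀ q₁ q₂ (ε + δ) hq₀ hq₁ hq₂
      ⟨by linarith [hε.1], by linarith [hq₀.1]⟩
      (by linarith) (by linarith) (by linarith) (by linarith) (by linarith) (by linarith)
    have lt1 := abs_le.mp (lip (seqT s q₀ q₁ q₂ m n) (g₀ * g) g₀')
    have lt2 := abs_le.mp (lip s (g₀ * g) g₀')
    have hcast : ((ε + δ : ℚ) : ℝ) = (ε : ℝ) + (δ : ℝ) := by push_cast; ring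
    rcases key with hk | hk
    · rw [hcast] at hk
      have := lt1.1
      linarith
    · rw [hcast] at hk
      have := lt2.2
      linarith
  · -- Cond2
    intro s g₀ hg₀ m n q₀ q₁ q₂ ε hq₀ hq₁ hq₂ hε ha1 ha2 ha3 ha4 ha5 ha6
    by_contra hcon
    push_neg at hcon
    obtain ⟨hU, hT⟩ := hcon
    set r : ℝ := min (ε : ℝ) (min (((q₂ : ℝ) + ε - f (seqU s q₀ q₁ q₂ m n) (g₀ * g)) / 2)
      (((q₁ : ℝ) - ε - f (seqT s q₀ q₁ q₂ m n) (g₀ * g)) / 2)) with hrdef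
    have hr : 0 < r := by
      have hε0 : (0 : ℝ) < (ε : ℝ) := by exact_mod_cast hε.1
      simp only [hrdef, lt_min_iff]
      exact ⟨hε0, by linarith, by linarith⟩
    obtain ⟨δ, hδ0, hδr⟩ := exists_rat_btwn hr
    have hδ0' : (0 : ℚ) < δ := by exact_mod_cast hδ0
    obtain ⟨g₀', hg₀'mem, hg₀'d⟩ := ball (g₀ * g) δ hδ0
    have hδ1 : (δ : ℝ) < (ε : ℝ) := lt_of_lt_of_le hδr (min_le_left _ _)
    have hδ2 : (δ : ℝ) < ((q₂ : ℝ) + ε - f (seqU s q₀ q₁ q₂ m n) (g₀ * g)) / 2 :=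
      lt_of_lt_of_le hδr (le_trans (min_le_right _ _) (min_le_left _ _))
    have hδ3 : (δ : ℝ) < ((q₁ : ℝ) - ε - f (seqT s q₀ q₁ q₂ m n) (g₀ * g)) / 2 :=
      lt_of_lt_of_le hδr (le_trans (min_le_right _ _) (min_le_right _ _))
    have hqδ : δ < ε := by exact_mod_cast hδ1
    have key := h2 s g₀' hg₀'mem m n q₀ q₁ q₂ (ε - δ) hq₀ hq₁ hq₂
      ⟨by linarith, by linarith [hε.2]⟩
      (by linarith [ha1]) (by linarith [ha2]) (by linarith [ha3]) (by linarith [ha4])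
      (by linarith [ha5]) (by linarith [ha6])
    have lt1 := abs_le.mp (lip (seqU s q₀ q₁ q₂ m n) (g₀ * g) g₀')
    have lt2 := abs_le.mp (lip (seqT s q₀ q₁ q₂ m n) (g₀ * g) g₀')
    have hcast : ((ε - δ : ℚ) : ℝ) = (ε : ℝ) - (δ : ℝ) := by push_cast; ring
    rcases key with hk | hk
    · rw [hcast] at hk
      have := lt1.1
      linarith
    · rw [hcast] at hk
      have := lt2.1
      linarith
  · -- Cond3
    intro s g₀ hg₀ q₀ hq₀ ε hε hlt
    have hε3 : ε / 3 ∈ Ioo (0 : ℚ) 1 := ⟨by linarith [hε.1], by linarith [hε.1, hε.2]⟩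
    have hε3R : (0 : ℝ) < ((ε / 3 : ℚ) : ℝ) := by exact_mod_cast hε3.1
    -- step 1: approximate g₀ * g by g₀' ∈ G₀
    set r₁ : ℝ := min ((ε / 3 : ℚ) : ℝ) ((q₀ : ℝ) - f s (g₀ * g)) with hr₁def
    have hr₁ : 0 < r₁ := lt_min hε3R (by linarith)
    obtain ⟨g₀', hg₀'mem, hg₀'d⟩ := ball (g₀ * g) r₁ hr₁
    have habs1 := abs_le.mp (lip s (g₀ * g) g₀')
    have hfg₀' : f s g₀' < (q₀ : ℝ) := by
      have h2 : d (g₀ * g) g₀' < (q₀ : ℝ) - f s (g₀ * g) := lt_of_lt_of_le hg₀'d (min_le_right _ _)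
      linarith
    obtain ⟨q₁, q₂, g₁, m, n, hg₁mem, hq₂pos, hq₂q₁, hq₁q₀, hg₁d, hg₁val⟩ :=
      h3 s g₀' hg₀'mem q₀ hq₀ (ε / 3) hε3 hfg₀'
    -- step 2: approximate g₁ by a point of G₀ * g
    set r₂ : ℝ := min ((ε / 3 : ℚ) : ℝ) ((q₂ : ℝ) - f (seqU s q₀ q₁ q₂ m n) g₁) with hr₂def
    have hr₂ : 0 < r₂ := lt_min hε3R (by linarith)
    obtain ⟨g₂, hg₂mem, hg₂d⟩ := ball (g₁ * g⁻¹) r₂ hr₂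
    have hkey : d g₁ (g₂ * g) < r₂ := by
      have : d g₁ (g₂ * g) = d (g₁ * g⁻¹) g₂ := by
        have := dinv (g₁ * g⁻¹) g₂ g
        simpa [mul_assoc] using this
      rw [this]; exact hg₂d
    refine ⟨q₁, q₂, g₂, m, n, hg₂mem, hq₂pos, hq₂q₁, hq₁q₀, ?_, ?_⟩
    · -- distance estimate
      have e1 : d g₀ g₂ = d (g₀ * g) (g₂ * g) := (dinv g₀ g₂ g).symm
      have e2 : d (g₀ * g) (g₂ * g) ≤ d (g₀ * g) g₀' + d g₀' (g₂ * g) := dtri _ _ _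
      have e3 : d g₀' (g₂ * g) ≤ d g₀' g₁ + d g₁ (g₂ * g) := dtri _ _ _
      have b1 : d (g₀ * g) g₀' < ((ε / 3 : ℚ) : ℝ) := lt_of_lt_of_le hg₀'d (min_le_left _ _)
      have b3 : d g₁ (g₂ * g) < ((ε / 3 : ℚ) : ℝ) := lt_of_lt_of_le hkey (min_le_left _ _)
      have hc : ((ε / 3 : ℚ) : ℝ) + ((ε / 3 : ℚ) : ℝ) + ((ε / 3 : ℚ) : ℝ) = (ε : ℝ) := by
        push_cast; ring
      rw [e1]
      calc d (g₀ * g) (g₂ * g) ≤ d (g₀ * g) g₀' + (d g₀' g₁ + d g₁ (g₂ * g)) := by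
            linarith
        _ < ((ε / 3 : ℚ) : ℝ) + (((ε / 3 : ℚ) : ℝ) + ((ε / 3 : ℚ) : ℝ)) := by
            linarith
        _ = (ε : ℝ) := by linarith
    · -- value estimate
      have habs := abs_le.mp (lip (seqU s q₀ q₁ q₂ m n) (g₂ * g) g₁)
      have hdsym : d (g₂ * g) g₁ = d g₁ (g₂ * g) := dsymm _ _
      have b : d g₁ (g₂ * g) < (q₂ : ℝ) - f (seqU s q₀ q₁ q₂ m n) g₁ :=
        lt_of_lt_of_le hkey (min_le_right _ _)
      rw [hdsym] at habs
      linarith [habs.2]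
end

section
/- If f⃗ ∈ X, then condition (3) holds with g₀ ranging over all of G: for all s ∈ ℚ^{<ℕ}, g₀ ∈ G, q₀,ε ∈ ℚ∩(0,1), if f_s(g₀) < q₀ then there are q₁,q₂ ∈ ℚ with 0 < q₂ < q₁ < q₀, g₁ ∈ G₀ with d(g₀,g₁) < ε, and n,m ∈ ℕ such that f_u(g₁) < q₂ where u = sq₀q₁q₂1mn. -/
open Set Topology

/-- If `f⃗ ∈ X`, then condition (3) holds with `g₀` ranging over all of `G`
(with the witness `g₁` still in `G₀`). -/
theorem hjorthX_cond3_univ {G : Type*} [Group G] [TopologicalSpace G]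
    [IsTopologicalGroup G] [PolishSpace G]
    (d : G → G → ℝ) (hd : IsRightInvariantCompatibleMetric d)
    (G₀ : Subgroup G) (hG₀count : (G₀ : Set G).Countable) (hG₀dense : Dense (G₀ : Set G))
    (f : List ℚ → G → ℝ) (hf : f ∈ HjorthX d G₀) :
    Cond3 d f (Set.univ : Set G) (G₀ : Set G) := by
  obtain ⟨hL, h1, h2, h3⟩ := hf
  obtain ⟨hsymm, heq0, htri, hinv, hbd, hbasis⟩ := hd
  intro s g₀ _ q₀ hq₀ ε hε hlt
  have hε0 : (0:ℝ) < (ε:ℝ) := by exact_mod_cast hε.1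
  obtain ⟨δ, hδ0, hδlt⟩ := exists_rat_btwn
    (show (0:ℝ) < min (ε:ℝ) ((q₀:ℝ) - f s g₀) from lt_min hε0 (by linarith))
  have hδε : (δ:ℝ) < ε := lt_of_lt_of_le hδlt (min_le_left _ _)
  have hδq : f s g₀ + δ < q₀ := by
    have := lt_of_lt_of_le hδlt (min_le_right _ _); linarith
  have hball : {y | d g₀ y < (δ:ℝ)} ∈ nhds g₀ :=
    (hbasis g₀).mem_of_mem hδ0
  obtain ⟨g₀', hdball, hg₀'⟩ := (mem_closure_iff_nhds.mp (hG₀dense g₀)) _ hball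
  have hdball' : d g₀ g₀' < (δ:ℝ) := hdball
  have hlip := (hL s).2 g₀' g₀
  have habs := abs_sub_le_iff.mp hlip
  have hsym : d g₀' g₀ = d g₀ g₀' := hsymm _ _
  have hfg' : f s g₀' < (q₀:ℝ) := by
    have := habs.1
    rw [hsym] at this
    linarith
  have hδε' : δ < ε := by exact_mod_cast hδε
  have hδ0' : (0:ℚ) < δ := by exact_mod_cast hδ0
  have hε' : ε - δ ∈ Ioo (0:ℚ) 1 := ⟨by linarith, by linarith [hε.2]⟩
  obtain ⟨q₁, q₂, g₁, m, n, hg₁, hq₂0, hq₂₁, hq₁₀, hd₁, hu⟩ :=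
    h3 s g₀' hg₀' q₀ hq₀ (ε - δ) hε' hfg'
  refine ⟨q₁, q₂, g₁, m, n, hg₁, hq₂0, hq₂₁, hq₁₀, ?_, hu⟩
  have htr := htri g₀ g₀' g₁
  push_cast at hd₁
  linarith
end

section
/- The topological space (X, τ) is Hausdorff. -/
open Set Topology

private lemma hjorth_sep {G : Type*} [Group G] (d : G → G → ℝ)
    (G₀ : Subgroup G)
    (x y : ↥(HjorthX d G₀)) (s : List ℚ) (g₀ : G) (hg₀ : g₀ ∈ G₀)
    (hlt : x.1 s g₀ < y.1 s g₀) :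
    ∃ U V : Set ↥(HjorthX d G₀),
      U ∈ {U | ∃ (s : List ℚ) (g₀ : G) (q₀ : ℚ), g₀ ∈ G₀ ∧
        U = {f : ↥(HjorthX d G₀) | f.1 s g₀ < (q₀ : ℝ)}} ∧
      V ∈ {U | ∃ (s : List ℚ) (g₀ : G) (q₀ : ℚ), g₀ ∈ G₀ ∧
        U = {f : ↥(HjorthX d G₀) | f.1 s g₀ < (q₀ : ℝ)}} ∧
      x ∈ U ∧ y ∈ V ∧ Disjoint U V := by
  obtain ⟨hxL, hx1, hx2, hx3⟩ := x.2
  obtain ⟨hyL, hy1, hy2, hy3⟩ := y.2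
  have ha0 : (0:ℝ) ≤ x.1 s g₀ := ((hxL s).1 g₀).1
  have hb1 : y.1 s g₀ ≤ 1 := ((hyL s).1 g₀).2
  obtain ⟨q₀, hq₀a, hq₀b⟩ := exists_rat_btwn hlt
  have hq₀pos : 0 < q₀ := by exact_mod_cast ha0.trans_lt hq₀a
  have hq₀lt1 : q₀ < 1 := by exact_mod_cast hq₀b.trans_le hb1
  have hmin : (0:ℝ) < min ((y.1 s g₀ - q₀)/2) 1 := lt_min (by linarith) one_pos
  obtain ⟨ε₃, hε₃0, hε₃m⟩ := exists_rat_btwn hmin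
  have hε₃pos : 0 < ε₃ := by exact_mod_cast hε₃0
  have hε₃lt1 : ε₃ < 1 := by exact_mod_cast hε₃m.trans_le (min_le_right _ _)
  have hε₃half : (ε₃:ℝ) < (y.1 s g₀ - q₀)/2 := hε₃m.trans_le (min_le_left _ _)
  obtain ⟨q₁, q₂, g₁, m, n, hg₁, hq₂0, hq₂q₁, hq₁q₀, hdist, hxu⟩ :=
    hx3 s g₀ hg₀ q₀ ⟨hq₀pos, hq₀lt1⟩ ε₃ ⟨hε₃pos, hε₃lt1⟩ hq₀a
  set ε : ℚ := min ε₃ (min q₂ (1 - q₀)) / 2 with hεdef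
  have hm1 := min_le_left ε₃ (min q₂ (1 - q₀))
  have hm2 := (min_le_right ε₃ (min q₂ (1 - q₀))).trans (min_le_left q₂ (1 - q₀))
  have hm3 := (min_le_right ε₃ (min q₂ (1 - q₀))).trans (min_le_right q₂ (1 - q₀))
  have hminpos : 0 < min ε₃ (min q₂ (1 - q₀)) :=
    lt_min hε₃pos (lt_min hq₂0 (by linarith))
  have hε0 : 0 < ε := by rw [hεdef]; linarith
  have hεε₃ : ε < ε₃ := by rw [hεdef]; linarith
  have hεq₂ : ε < q₂ := by rw [hεdef]; linarith
  have hεq₀ : ε < 1 - q₀ := by rw [hεdef]; linarith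
  have hIq₀ : q₀ ∈ Ioo (0:ℚ) 1 := ⟨hq₀pos, hq₀lt1⟩
  have hIq₁ : q₁ ∈ Ioo (0:ℚ) 1 := ⟨hq₂0.trans hq₂q₁, hq₁q₀.trans hq₀lt1⟩
  have hIq₂ : q₂ ∈ Ioo (0:ℚ) 1 := ⟨hq₂0, (hq₂q₁.trans hq₁q₀).trans hq₀lt1⟩
  have hIε : ε ∈ Ioo (0:ℚ) 1 := ⟨hε0, by linarith⟩
  have c1 : 0 < q₀ - ε := by linarith
  have c2 : q₀ + ε < 1 := by linarith
  have c3 : 0 < q₁ - ε := by linarith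
  have c4 : q₁ + ε < 1 := by linarith
  have c5 : 0 < q₂ - ε := by linarith
  have c6 : q₂ + ε < 1 := by linarith
  have hεR : (ε:ℝ) < (ε₃:ℝ) := by exact_mod_cast hεε₃
  have hε0R : (0:ℝ) < (ε:ℝ) := by exact_mod_cast hε0
  have hyLip := abs_sub_le_iff.mp ((hyL s).2 g₀ g₁)
  have hyg₁ : (q₀:ℝ) + (ε:ℝ) < y.1 s g₁ := by
    have h1 := hyLip.1
    linarith
  have hyV : y.1 (seqT s q₀ q₁ q₂ m n) g₁ < (q₁:ℝ) - (ε:ℝ) := by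
    rcases hy1 s g₁ hg₁ m n q₀ q₁ q₂ ε hIq₀ hIq₁ hIq₂ hIε c1 c2 c3 c4 c5 c6 with h | h
    · exact h
    · exfalso; linarith
  refine ⟨{k | k.1 (seqU s q₀ q₁ q₂ m n) g₁ < (q₂:ℝ)},
    {k | k.1 (seqT s q₀ q₁ q₂ m n) g₁ < ((q₁ - ε : ℚ):ℝ)},
    ⟨_, g₁, q₂, hg₁, rfl⟩, ⟨_, g₁, q₁ - ε, hg₁, rfl⟩, hxu, ?_, ?_⟩
  · show y.1 (seqT s q₀ q₁ q₂ m n) g₁ < ((q₁ - ε : ℚ):ℝ)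
    push_cast
    exact hyV
  · rw [Set.disjoint_left]
    rintro k hkU hkV
    simp only [Set.mem_setOf_eq] at hkU hkV
    push_cast at hkV
    obtain ⟨hkL, hk1, hk2, hk3⟩ := k.2
    rcases hk2 s g₁ hg₁ m n q₀ q₁ q₂ ε hIq₀ hIq₁ hIq₂ hIε c1 c2 c3 c4 c5 c6 with h | h
    · linarith
    · linarith

/-- The topological space `(X, τ)` is Hausdorff. -/
theorem hjorthTau_t2Space {G : Type*} [Group G] [TopologicalSpace G]
    [IsTopologicalGroup G] [PolishSpace G]
    (d : G → G → ℝ) (hd : IsRightInvariantCompatibleMetric d)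
    (G₀ : Subgroup G) (hG₀count : (G₀ : Set G).Countable) (hG₀dense : Dense (G₀ : Set G)) :
    @T2Space ↥(HjorthX d G₀) (hjorthTau d G₀) := by
  letI : TopologicalSpace ↥(HjorthX d G₀) := hjorthTau d G₀
  constructor
  intro x y hxy
  have hne : x.1 ≠ y.1 := fun h => hxy (Subtype.ext h)
  have hex : ∃ s g, x.1 s g ≠ y.1 s g := by
    by_contra h
    push_neg at h
    exact hne (funext fun s => funext fun g => h s g)
  obtain ⟨s, g, hg⟩ := hex
  set δ := |x.1 s g - y.1 s g| with hδdef
  have hδ0 : 0 < δ := abs_pos.mpr (sub_ne_zero.mpr hg)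
  have hball : {z | d g z < δ/2} ∈ nhds g :=
    (hd.2.2.2.2.2 g).mem_of_mem (by linarith)
  obtain ⟨g₀, hg₀ball, hg₀⟩ := mem_closure_iff_nhds.mp (hG₀dense g) _ hball
  have hg₀d : d g g₀ < δ/2 := hg₀ball
  have hne₀ : x.1 s g₀ ≠ y.1 s g₀ := by
    intro heq
    have h1 : |x.1 s g - x.1 s g₀| ≤ d g g₀ := (x.2.1 s).2 g g₀
    have h2 : |y.1 s g - y.1 s g₀| ≤ d g g₀ := (y.2.1 s).2 g g₀
    have h3 : δ ≤ |x.1 s g - x.1 s g₀| + |y.1 s g - y.1 s g₀| := by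
      rw [hδdef]
      calc |x.1 s g - y.1 s g|
          = |(x.1 s g - x.1 s g₀) - (y.1 s g - y.1 s g₀)| := by
            rw [heq]; congr 1; ring
        _ ≤ _ := abs_sub _ _
    linarith
  rcases hne₀.lt_or_gt with h | h
  · obtain ⟨U, V, hU, hV, hxU, hyV, hUV⟩ := hjorth_sep d G₀ x y s g₀ hg₀ h
    exact ⟨U, V, TopologicalSpace.GenerateOpen.basic _ hU,
      TopologicalSpace.GenerateOpen.basic _ hV, hxU, hyV, hUV⟩
  · obtain ⟨U, V, hU, hV, hyU, hxV, hUV⟩ := hjorth_sep d G₀ y x s g₀ hg₀ h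
    exact ⟨V, U, TopologicalSpace.GenerateOpen.basic _ hV,
      TopologicalSpace.GenerateOpen.basic _ hU, hxV, hyU, hUV.symm⟩
end

section
/- The topological space (X, τ) is regular: for every point f⃗ ∈ X and every open set 𝒪 containing f⃗ there is an open set U with f⃗ ∈ U and the closure of U contained in 𝒪. -/
open Set Topology

/-- The topological space `(X, τ)` is regular: every point of every open set
`𝒪` has an open neighbourhood `U` whose closure is contained in `𝒪`. -/
theorem hjorthTau_regular {G : Type*} [Group G] [TopologicalSpace G]
    [IsTopologicalGroup G] [PolishSpace G]
    (d : G → G → ℝ) (hd : IsRightInvariantCompatibleMetric d)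
    (G₀ : Subgroup G) (hG₀count : (G₀ : Set G).Countable) (hG₀dense : Dense (G₀ : Set G)) :
    ∀ (x : ↥(HjorthX d G₀)) (O : Set ↥(HjorthX d G₀)),
      (hjorthTau d G₀).IsOpen O → x ∈ O →
      ∃ U : Set ↥(HjorthX d G₀), (hjorthTau d G₀).IsOpen U ∧ x ∈ U ∧
        @closure _ (hjorthTau d G₀) U ⊆ O := by
  classical
  letI : TopologicalSpace ↥(HjorthX d G₀) := hjorthTau d G₀
  have hopen : ∀ (s' : List ℚ) (g : G) (q : ℚ), g ∈ G₀ →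
      IsOpen {f : ↥(HjorthX d G₀) | f.1 s' g < (q : ℝ)} := fun s' g q hg =>
    TopologicalSpace.isOpen_generateFrom_of_mem ⟨s', g, q, hg, rfl⟩
  -- Key lemma: every point of a subbasic set has an open neighbourhood
  -- whose closure is contained in the subbasic set.
  have keyA : ∀ (x : ↥(HjorthX d G₀)) (s : List ℚ) (g₀ : G), g₀ ∈ G₀ → ∀ (q₀ : ℚ),
      x.1 s g₀ < (q₀ : ℝ) →
      ∃ U : Set ↥(HjorthX d G₀), IsOpen U ∧ x ∈ U ∧
        closure U ⊆ {f : ↥(HjorthX d G₀) | f.1 s g₀ < (q₀ : ℝ)} := by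
    intro x s g₀ hg₀ q₀ hx
    by_cases hq : (1 : ℚ) < q₀
    · refine ⟨Set.univ, isOpen_univ, mem_univ _, ?_⟩
      intro f _
      have h1 : f.1 s g₀ ≤ 1 := ((f.2.1 s).1 g₀).2
      have h2 : (1 : ℝ) < (q₀ : ℝ) := by exact_mod_cast hq
      simp only [mem_setOf_eq]; linarith
    · push_neg at hq
      have hq' : (q₀ : ℝ) ≤ 1 := by exact_mod_cast hq
      have hx0 : (0 : ℝ) ≤ x.1 s g₀ := ((x.2.1 s).1 g₀).1
      obtain ⟨q₀', hq₀'1, hq₀'2⟩ := exists_rat_btwn hx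
      have hq₀'pos : 0 < q₀' := by
        have : (0 : ℝ) < (q₀' : ℝ) := lt_of_le_of_lt hx0 hq₀'1
        exact_mod_cast this
      have hq₀'lt : q₀' < q₀ := by exact_mod_cast hq₀'2
      have hq₀'lt1 : q₀' < 1 := lt_of_lt_of_le hq₀'lt hq
      set ε : ℚ := min ((q₀ - q₀') / 3) (1 / 2) with hεdef
      have hεpos : 0 < ε := lt_min (by linarith) (by norm_num)
      have hεlt1 : ε < 1 := lt_of_le_of_lt (min_le_right _ _) (by norm_num)
      have hεle : ε ≤ (q₀ - q₀') / 3 := min_le_left _ _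
      obtain ⟨hLx, h1x, h2x, h3x⟩ := x.2
      obtain ⟨q₁, q₂, g₁, m, n, hg₁, hq₂pos, hq₂q₁, hq₁q₀', hdist, hxu⟩ :=
        h3x s g₀ hg₀ q₀' ⟨hq₀'pos, hq₀'lt1⟩ ε ⟨hεpos, hεlt1⟩ hq₀'1
      set δ : ℚ := min ε (q₂ / 2) with hδdef
      have hδpos : 0 < δ := lt_min hεpos (by linarith)
      have hδε : δ ≤ ε := min_le_left _ _
      have hδq₂ : δ ≤ q₂ / 2 := min_le_right _ _
      have hmem0 : q₀' ∈ Ioo (0 : ℚ) 1 := ⟨hq₀'pos, hq₀'lt1⟩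
      have hmem1 : q₁ ∈ Ioo (0 : ℚ) 1 := ⟨by linarith, by linarith⟩
      have hmem2 : q₂ ∈ Ioo (0 : ℚ) 1 := ⟨hq₂pos, by linarith⟩
      have hmemδ : δ ∈ Ioo (0 : ℚ) 1 := ⟨hδpos, by linarith⟩
      have e1 : 0 < q₀' - δ := by linarith
      have e2 : q₀' + δ < 1 := by linarith
      have e3 : 0 < q₁ - δ := by linarith
      have e4 : q₁ + δ < 1 := by linarith
      have e5 : 0 < q₂ - δ := by linarith
      have e6 : q₂ + δ < 1 := by linarith
      refine ⟨{h : ↥(HjorthX d G₀) | h.1 (seqU s q₀' q₁ q₂ m n) g₁ < (q₂ : ℝ)},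
        hopen _ _ _ hg₁, hxu, ?_⟩
      have hWopen : IsOpen
          {h : ↥(HjorthX d G₀) | h.1 (seqT s q₀' q₁ q₂ m n) g₁ < ((q₁ - δ : ℚ) : ℝ)} :=
        hopen _ _ _ hg₁
      have hsub : {h : ↥(HjorthX d G₀) | h.1 (seqU s q₀' q₁ q₂ m n) g₁ < (q₂ : ℝ)} ⊆
          {h : ↥(HjorthX d G₀) | h.1 (seqT s q₀' q₁ q₂ m n) g₁ < ((q₁ - δ : ℚ) : ℝ)}ᶜ := by
        intro h hh
        obtain ⟨hLh, h1h, h2h, h3h⟩ := h.2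
        rcases h2h s g₁ hg₁ m n q₀' q₁ q₂ δ hmem0 hmem1 hmem2 hmemδ e1 e2 e3 e4 e5 e6 with
          hc | hc
        · exfalso
          have hδR : (0 : ℝ) < (δ : ℝ) := by exact_mod_cast hδpos
          have : h.1 (seqU s q₀' q₁ q₂ m n) g₁ < (q₂ : ℝ) := hh
          linarith
        · intro hW
          have h' : h.1 (seqT s q₀' q₁ q₂ m n) g₁ < ((q₁ - δ : ℚ) : ℝ) := hW
          rw [Rat.cast_sub] at h'
          linarith
      have hclsub := closure_minimal hsub hWopen.isClosed_compl
      intro h hh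
      have hW : ¬ (h.1 (seqT s q₀' q₁ q₂ m n) g₁ < ((q₁ - δ : ℚ) : ℝ)) := hclsub hh
      obtain ⟨hLh, h1h, h2h, h3h⟩ := h.2
      rcases h1h s g₁ hg₁ m n q₀' q₁ q₂ δ hmem0 hmem1 hmem2 hmemδ e1 e2 e3 e4 e5 e6 with
        hc | hc
      · exact absurd (by push_cast; linarith : h.1 (seqT s q₀' q₁ q₂ m n) g₁ <
          ((q₁ - δ : ℚ) : ℝ)) hW
      · have hlip : |h.1 s g₀ - h.1 s g₁| ≤ d g₀ g₁ := (hLh s).2 g₀ g₁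
        have hle : h.1 s g₀ ≤ h.1 s g₁ + d g₀ g₁ := by
          have := (abs_sub_le_iff.mp hlip).1; linarith
        show h.1 s g₀ < (q₀ : ℝ)
        have hδε' : (δ : ℝ) ≤ (ε : ℝ) := by exact_mod_cast hδε
        have hεle' : (ε : ℝ) ≤ ((q₀ : ℝ) - (q₀' : ℝ)) / 3 := by
          have : ((q₀ - q₀') / 3 : ℚ) = ((q₀ : ℚ) - q₀') / 3 := by ring
          exact_mod_cast hεle
        linarith
  -- Main argument via the basis of finite intersections of subbasic sets.
  intro x O hO hxO
  have hbasis := TopologicalSpace.isTopologicalBasis_of_subbasis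
    (t := hjorthTau d G₀)
    (s := {U : Set ↥(HjorthX d G₀) | ∃ (s : List ℚ) (g₀ : G) (q₀ : ℚ), g₀ ∈ G₀ ∧
      U = {f : ↥(HjorthX d G₀) | f.1 s g₀ < (q₀ : ℝ)}}) rfl
  obtain ⟨v, ⟨F, ⟨hFfin, hFsub⟩, rfl⟩, hxv, hvO⟩ :=
    hbasis.exists_subset_of_mem_open hxO hO
  have key : ∀ V : Set ↥(HjorthX d G₀), ∃ U, IsOpen U ∧ x ∈ U ∧
      (V ∈ F → closure U ⊆ V) := by
    intro V
    by_cases hV : V ∈ F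
    · obtain ⟨s, g₀, q₀, hg₀, rfl⟩ := hFsub hV
      have hxV : x.1 s g₀ < (q₀ : ℝ) := hxv _ hV
      obtain ⟨U, hUo, hxU, hcl⟩ := keyA x s g₀ hg₀ q₀ hxV
      exact ⟨U, hUo, hxU, fun _ => hcl⟩
    · exact ⟨Set.univ, isOpen_univ, mem_univ _, fun h => absurd h hV⟩
  choose U hUo hxU hcl using key
  refine ⟨⋂ V ∈ F, U V, hFfin.isOpen_biInter (fun V _ => hUo V), ?_, ?_⟩
  · exact mem_iInter₂.mpr fun V _ => hxU V
  · intro h hh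
    refine hvO fun V hV => ?_
    exact hcl V hV (closure_mono (biInter_subset_of_mem hV) hh)
end

section
/- The topological space (X, τ) is separable and metrizable. -/
open Set Topology

/-- The topological space `(X, τ)` is separable and metrizable. -/
theorem hjorthTau_separable_metrizable {G : Type*} [Group G] [TopologicalSpace G]
    [IsTopologicalGroup G] [PolishSpace G]
    (d : G → G → ℝ) (hd : IsRightInvariantCompatibleMetric d)
    (G₀ : Subgroup G) (hG₀count : (G₀ : Set G).Countable) (hG₀dense : Dense (G₀ : Set G)) :
    @TopologicalSpace.SeparableSpace ↥(HjorthX d G₀) (hjorthTau d G₀) ∧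
    @TopologicalSpace.MetrizableSpace ↥(HjorthX d G₀) (hjorthTau d G₀) := by
  classical
  obtain ⟨dsymm, dzero, dtri, -, dbd1, dbasis⟩ := hd
  have dnonneg : ∀ g h : G, 0 ≤ d g h := by
    intro g h
    have h0 : d g g = 0 := (dzero g g).mpr rfl
    nlinarith [dtri g h g, dsymm g h]
  letI : TopologicalSpace ↥(HjorthX d G₀) := hjorthTau d G₀
  set B : Set (Set ↥(HjorthX d G₀)) :=
    {U | ∃ (s : List ℚ) (g₀ : G) (q₀ : ℚ), g₀ ∈ G₀ ∧
      U = {f : ↥(HjorthX d G₀) | f.1 s g₀ < (q₀ : ℝ)}} with hBdef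
  have hgen : (hjorthTau d G₀) = TopologicalSpace.generateFrom B := rfl
  have hopen : ∀ (s : List ℚ) (g : G) (q : ℚ), g ∈ G₀ →
      IsOpen {h : ↥(HjorthX d G₀) | h.1 s g < (q : ℝ)} := by
    intro s g q hg
    exact TopologicalSpace.isOpen_generateFrom_of_mem ⟨s, g, q, hg, rfl⟩
  -- Key regularity lemma for subbasic sets
  have key : ∀ (f : ↥(HjorthX d G₀)) (s : List ℚ) (g₀ : G), g₀ ∈ G₀ → ∀ q₀ : ℚ,
      f.1 s g₀ < (q₀ : ℝ) →
      ∃ t, t ∈ nhds f ∧ IsClosed t ∧ t ⊆ {h : ↥(HjorthX d G₀) | h.1 s g₀ < (q₀ : ℝ)} := by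
    intro f s g₀ hg₀ q₀ hf
    by_cases hq1 : (1 : ℝ) < (q₀ : ℝ)
    · exact ⟨Set.univ, Filter.univ_mem, isClosed_univ,
        fun h _ => lt_of_le_of_lt ((h.2.1 s).1 g₀).2 hq1⟩
    push_neg at hq1
    obtain ⟨q₀', hq₀'1, hq₀'2⟩ := exists_rat_btwn hf
    have hq₀'ltq : q₀' < q₀ := by exact_mod_cast hq₀'2
    have hq₀'pos : 0 < q₀' := by
      have h0 : (0 : ℝ) ≤ f.1 s g₀ := ((f.2.1 s).1 g₀).1
      exact_mod_cast lt_of_le_of_lt h0 hq₀'1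
    have hq₀le1 : q₀ ≤ 1 := by exact_mod_cast hq1
    have hq₀'lt1 : q₀' < 1 := lt_of_lt_of_le hq₀'ltq hq₀le1
    set ε₀ : ℚ := min (1/2) ((q₀ - q₀')/4) with hε₀def
    have hε₀pos : 0 < ε₀ := lt_min (by norm_num) (by linarith)
    have hε₀lt1 : ε₀ < 1 := lt_of_le_of_lt (min_le_left _ _) (by norm_num)
    have hε₀c : ε₀ ≤ (q₀ - q₀')/4 := min_le_right _ _
    obtain ⟨q₁, q₂, g₁, m, n, hg₁, hq₂pos, hq₂q₁, hq₁q₀', hdist, hfu⟩ :=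
      f.2.2.2.2 s g₀ hg₀ q₀' ⟨hq₀'pos, hq₀'lt1⟩ ε₀ ⟨hε₀pos, hε₀lt1⟩ hq₀'1
    set ε : ℚ := min (q₂/2) (min ((1 - q₀')/2) ((q₀ - q₀')/4)) with hεdef
    have hεpos : 0 < ε := lt_min (by linarith) (lt_min (by linarith) (by linarith))
    have hεq₂ : ε < q₂ := lt_of_le_of_lt (min_le_left _ _) (by linarith)
    have hεb : ε ≤ (1 - q₀')/2 := le_trans (min_le_right _ _) (min_le_left _ _)
    have hεc : ε ≤ (q₀ - q₀')/4 := le_trans (min_le_right _ _) (min_le_right _ _)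
    have hq₁pos : 0 < q₁ := lt_trans hq₂pos hq₂q₁
    have hq₁lt1 : q₁ < 1 := lt_trans hq₁q₀' hq₀'lt1
    have hq₂lt1 : q₂ < 1 := lt_trans hq₂q₁ hq₁lt1
    have hεlt1 : ε < 1 := by
      have : (1 - q₀')/2 < 1 := by linarith
      linarith
    have c1 : 0 < q₀' - ε := by linarith
    have c2 : q₀' + ε < 1 := by linarith
    have c3 : 0 < q₁ - ε := by linarith
    have c4 : q₁ + ε < 1 := by linarith
    have c5 : 0 < q₂ - ε := by linarith
    have c6 : q₂ + ε < 1 := by linarith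
    have hNopen : IsOpen {h : ↥(HjorthX d G₀) |
        h.1 (seqU s q₀' q₁ q₂ m n) g₁ < (q₂ : ℝ)} := hopen _ g₁ q₂ hg₁
    refine ⟨closure {h : ↥(HjorthX d G₀) | h.1 (seqU s q₀' q₁ q₂ m n) g₁ < (q₂ : ℝ)},
      Filter.mem_of_superset (hNopen.mem_nhds hfu) subset_closure, isClosed_closure, ?_⟩
    intro h hcl
    by_contra hcon
    have hcon' : (q₀ : ℝ) ≤ h.1 s g₀ := not_lt.mp hcon
    -- h_s(g₁) is large
    have hlip : |h.1 s g₀ - h.1 s g₁| ≤ d g₀ g₁ := (h.2.1 s).2 g₀ g₁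
    have hhs : (q₀' : ℝ) + (ε : ℝ) < h.1 s g₁ := by
      have h1 : h.1 s g₀ - h.1 s g₁ ≤ d g₀ g₁ := (abs_le.mp hlip).2
      have h2 : ((q₀' : ℚ) : ℝ) + (ε : ℝ) + (ε₀ : ℝ) < ((q₀ : ℚ) : ℝ) := by
        have : q₀' + ε + ε₀ < q₀ := by linarith
        exact_mod_cast this
      linarith
    -- By Cond1 at g₁, h_t(g₁) < q₁ - ε
    have hC1 := h.2.2.1 s g₁ hg₁ m n q₀' q₁ q₂ ε ⟨hq₀'pos, hq₀'lt1⟩ ⟨hq₁pos, hq₁lt1⟩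
      ⟨hq₂pos, hq₂lt1⟩ ⟨hεpos, hεlt1⟩ c1 c2 c3 c4 c5 c6
    have hhV : h.1 (seqT s q₀' q₁ q₂ m n) g₁ < (q₁ : ℝ) - (ε : ℝ) := by
      rcases hC1 with h' | h'
      · exact h'
      · exact absurd h' (not_le.mpr hhs)
    -- V is an open neighbourhood of h
    have hVopen : IsOpen {h' : ↥(HjorthX d G₀) |
        h'.1 (seqT s q₀' q₁ q₂ m n) g₁ < ((q₁ - ε : ℚ) : ℝ)} := hopen _ g₁ (q₁ - ε) hg₁
    have hhVmem : h ∈ {h' : ↥(HjorthX d G₀) |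
        h'.1 (seqT s q₀' q₁ q₂ m n) g₁ < ((q₁ - ε : ℚ) : ℝ)} := by
      show h.1 (seqT s q₀' q₁ q₂ m n) g₁ < ((q₁ - ε : ℚ) : ℝ)
      push_cast
      exact hhV
    obtain ⟨h', hh'V, hh'N⟩ := mem_closure_iff.mp hcl _ hVopen hhVmem
    have hh'V' : h'.1 (seqT s q₀' q₁ q₂ m n) g₁ < (q₁ : ℝ) - (ε : ℝ) := by
      have := hh'V
      push_cast at this
      exact this
    have hC2 := h'.2.2.2.1 s g₁ hg₁ m n q₀' q₁ q₂ ε ⟨hq₀'pos, hq₀'lt1⟩ ⟨hq₁pos, hq₁lt1⟩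
      ⟨hq₂pos, hq₂lt1⟩ ⟨hεpos, hεlt1⟩ c1 c2 c3 c4 c5 c6
    rcases hC2 with h2 | h2
    · have hh'N' : h'.1 (seqU s q₀' q₁ q₂ m n) g₁ < (q₂ : ℝ) := hh'N
      have hεR : (0 : ℝ) < (ε : ℝ) := by exact_mod_cast hεpos
      linarith
    · linarith [hh'V']
  -- Regularity
  haveI hreg : RegularSpace ↥(HjorthX d G₀) := by
    apply RegularSpace.of_exists_mem_nhds_isClosed_subset
    intro a u hu
    obtain ⟨v, hvsub, hvopen, hav⟩ := mem_nhds_iff.mp hu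
    have H : ∀ v, TopologicalSpace.GenerateOpen B v →
        ∀ a ∈ v, ∃ t ∈ nhds a, IsClosed t ∧ t ⊆ v := by
      intro v hv
      induction hv with
      | basic u hu =>
        rintro a ha
        obtain ⟨s, g, q, hg, rfl⟩ := hu
        obtain ⟨t, h1, h2, h3⟩ := key a s g hg q ha
        exact ⟨t, h1, h2, h3⟩
      | univ => exact fun a _ => ⟨Set.univ, Filter.univ_mem, isClosed_univ, subset_rfl⟩
      | inter u v hu hv ihu ihv =>
        intro a ha
        obtain ⟨t1, ht1, hc1, hs1⟩ := ihu a ha.1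
        obtain ⟨t2, ht2, hc2, hs2⟩ := ihv a ha.2
        exact ⟨t1 ∩ t2, Filter.inter_mem ht1 ht2, hc1.inter hc2,
          Set.inter_subset_inter hs1 hs2⟩
      | sUnion S hS ih =>
        intro a ha
        obtain ⟨u, huS, hau⟩ := ha
        obtain ⟨t, ht, hc, hs⟩ := ih u huS a hau
        exact ⟨t, ht, hc, hs.trans (Set.subset_sUnion_of_mem huS)⟩
    obtain ⟨t, ht, htc, hts⟩ := H v hvopen a hav
    exact ⟨t, ht, htc, hts.trans hvsub⟩
  -- Density of G₀ in the d-metric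
  have hGdense' : ∀ (g : G) (ε : ℝ), 0 < ε → ∃ g' ∈ (G₀ : Set G), d g g' < ε := by
    intro g ε hε
    have hball : {y | d g y < ε} ∈ nhds g := (dbasis g).mem_of_mem hε
    obtain ⟨g', hg'1, hg'2⟩ := mem_closure_iff_nhds.mp (hG₀dense g) _ hball
    exact ⟨g', hg'2, hg'1⟩
  -- functions in X are determined by their values on G₀
  have hext : ∀ (x y : ↥(HjorthX d G₀)) (s : List ℚ),
      (∀ g ∈ (G₀ : Set G), x.1 s g = y.1 s g) → x.1 s = y.1 s := by
    intro x y s hagree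
    funext g
    by_contra hne
    have hδpos : 0 < |x.1 s g - y.1 s g| := abs_pos.mpr (sub_ne_zero.mpr hne)
    obtain ⟨g', hg', hdg⟩ := hGdense' g (|x.1 s g - y.1 s g|/2) (by linarith)
    have h1 : |x.1 s g - x.1 s g'| ≤ d g g' := (x.2.1 s).2 g g'
    have h2 : |y.1 s g' - y.1 s g| ≤ d g' g := (y.2.1 s).2 g' g
    have h3 : |x.1 s g - y.1 s g| ≤ |x.1 s g - x.1 s g'| + |x.1 s g' - y.1 s g| :=
      abs_sub_le _ _ _
    have h4 : |x.1 s g' - y.1 s g| = |y.1 s g' - y.1 s g| := by rw [hagree g' hg']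
    have h5 : d g' g = d g g' := dsymm g' g
    linarith
  -- T0
  haveI ht0 : T0Space ↥(HjorthX d G₀) := by
    refine ⟨fun {x y} hxy => ?_⟩
    apply Subtype.ext; funext s
    apply hext
    intro g hg
    by_contra hne
    rcases lt_or_gt_of_ne hne with hlt | hlt
    · obtain ⟨q, hq1, hq2⟩ := exists_rat_btwn hlt
      have hu := hxy.mem_open_iff (hopen s g q hg)
      exact absurd (hu.mp hq1) (not_lt.mpr hq2.le)
    · obtain ⟨q, hq1, hq2⟩ := exists_rat_btwn hlt
      have hu := hxy.mem_open_iff (hopen s g q hg)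
      exact absurd (hu.mpr hq1) (not_lt.mpr hq2.le)
  -- Second countability
  have hBcount : B.Countable := by
    have hsub : B ⊆ (fun p : List ℚ × G × ℚ =>
        {f : ↥(HjorthX d G₀) | f.1 p.1 p.2.1 < (p.2.2 : ℝ)}) ''
        ((Set.univ : Set (List ℚ)) ×ˢ ((G₀ : Set G) ×ˢ (Set.univ : Set ℚ))) := by
      rintro U ⟨s, g, q, hg, rfl⟩
      exact ⟨(s, g, q), ⟨trivial, hg, trivial⟩, rfl⟩
    exact Set.Countable.mono hsub
      ((Set.countable_univ.prod (hG₀count.prod Set.countable_univ)).image _)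
  haveI hsecond : SecondCountableTopology ↥(HjorthX d G₀) := by
    have hbasis := TopologicalSpace.isTopologicalBasis_of_subbasis hgen
    exact hbasis.secondCountableTopology
      ((Set.countable_setOf_finite_subset hBcount).image _)
  haveI : T3Space ↥(HjorthX d G₀) := {}
  exact ⟨TopologicalSpace.SecondCountableTopology.to_separableSpace,
    TopologicalSpace.metrizableSpace_of_t3_secondCountable ↥(HjorthX d G₀)⟩
end

section
/- Let O ⊆ Y be open, let q₀, q₁, ε be rationals with 0 < q₁ − ε and 0 < q₀ < 1, let W = ⋃{g·O : g ∈ G, d(1_G, g⁻¹) < q₀}, and let C ⊆ Y be a closed set with C ⊆ W. Fix y ∈ Y and g₀ ∈ G. If f_{Y∖C}^y(g₀) ≥ q₁ − ε, then f_O^y(g₀) < q₀. -/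
open Set Topology Pointwise

open Classical in
/-- For `A ⊆ Y` and `y ∈ Y`, the function
`f_A^y(g₀) = inf {d(1, g) : g • (g₀ • y) ∈ A}` if this set is nonempty, and `1`
otherwise. -/
noncomputable def fFn {G Y : Type*} [Group G] [MulAction G Y]
    (d : G → G → ℝ) (A : Set Y) (y : Y) (g₀ : G) : ℝ :=
  if ({g : G | g • (g₀ • y) ∈ A}).Nonempty then
    sInf ((fun g => d 1 g) '' {g : G | g • (g₀ • y) ∈ A})
  else 1

/-- Let `O ⊆ Y` be open, `q₀ q₁ ε` rationals with `0 < q₁ - ε` and `0 < q₀ < 1`,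
let `W = ⋃ {g • O : d(1, g⁻¹) < q₀}`, and let `C ⊆ W` be closed.  If
`f_{Y∖C}^y(g₀) ≥ q₁ - ε` then `f_O^y(g₀) < q₀`. -/
theorem fFn_lt_of_compl_ge {G Y : Type*} [Group G] [TopologicalSpace G]
    [IsTopologicalGroup G] [PolishSpace G]
    (d : G → G → ℝ) (hd : IsRightInvariantCompatibleMetric d)
    [TopologicalSpace Y] [PolishSpace Y] [MulAction G Y] [ContinuousSMul G Y]
    (O : Set Y) (hO : IsOpen O) (q₀ q₁ ε : ℚ)
    (hq₁ε : 0 < q₁ - ε) (hq₀pos : 0 < q₀) (hq₀lt : q₀ < 1)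
    (C : Set Y) (hC : IsClosed C)
    (hCW : C ⊆ {z : Y | ∃ g : G, d 1 g⁻¹ < (q₀ : ℝ) ∧ z ∈ g • O})
    (y : Y) (g₀ : G)
    (h : (q₁ : ℝ) - (ε : ℝ) ≤ fFn d Cᶜ y g₀) :
    fFn d O y g₀ < (q₀ : ℝ) := by
  obtain ⟨hsymm, heq, htri, -, -, -⟩ := hd
  have hnn : ∀ a b : G, 0 ≤ d a b := by
    intro a b
    have := htri a b a
    rw [(heq a a).2 rfl, hsymm b a] at this
    linarith
  -- g₀ • y ∈ C
  have hmem : g₀ • y ∈ C := by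
    by_contra hmc
    have hne : ({g : G | g • (g₀ • y) ∈ Cᶜ}).Nonempty := ⟨1, by simpa using hmc⟩
    have : fFn d Cᶜ y g₀ ≤ d 1 1 := by
      rw [fFn, if_pos hne]
      exact csInf_le ⟨0, by rintro _ ⟨g, -, rfl⟩; exact hnn 1 g⟩
        ⟨1, by simpa using hmc, rfl⟩
    rw [(heq 1 1).2 rfl] at this
    have : (q₁ : ℝ) - ε ≤ 0 := le_trans h this
    have : (0:ℝ) < q₁ - ε := by exact_mod_cast hq₁ε
    linarith
  obtain ⟨g, hg, hgo⟩ := hCW hmem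
  have hginv : g⁻¹ • (g₀ • y) ∈ O := by
    rwa [mem_smul_set_iff_inv_smul_mem] at hgo
  have hne : ({g' : G | g' • (g₀ • y) ∈ O}).Nonempty := ⟨g⁻¹, hginv⟩
  rw [fFn, if_pos hne]
  calc sInf ((fun g' => d 1 g') '' {g' : G | g' • (g₀ • y) ∈ O}) ≤ d 1 g⁻¹ :=
        csInf_le ⟨0, by rintro _ ⟨g', -, rfl⟩; exact hnn 1 g'⟩ ⟨g⁻¹, hginv, rfl⟩
    _ < q₀ := hg
end

section
/- Let O ⊆ Y be open, y ∈ Y, g₀ ∈ G, and q₀ ∈ ℚ∩(0,1) with f_O^y(g₀) < q₀. Then there exist open sets O_n, O_m ⊆ Y and rationals q₁, q₂ with 0 < q₂ < q₁ < q₀ such that: g₀·y ∈ O_n; the closure of O_m is contained in W = ⋃{g·O : g ∈ G, d(1_G, g⁻¹) < q₀}; and for all z ∈ Y and g, h ∈ G, if d(1_G, g) < q₁ + q₂ and g·z ∈ O_n and d(1_G, h) < q₁, then h·z ∈ O_m. -/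
open Set Topology Pointwise

/-- Let `O ⊆ Y` be open, `y ∈ Y`, `g₀ ∈ G` and `q₀ ∈ ℚ ∩ (0,1)` with
`f_O^y(g₀) < q₀`.  Then there are open `Oₙ, Oₘ ⊆ Y` and rationals
`0 < q₂ < q₁ < q₀` with `g₀ • y ∈ Oₙ`, `cl(Oₘ) ⊆ W = ⋃ {g • O : d(1,g⁻¹) < q₀}`,
and such that whenever `d(1,g) < q₁ + q₂`, `g • z ∈ Oₙ`, and `d(1,h) < q₁`, then
`h • z ∈ Oₘ`. -/
theorem fFn_good_witnesses {G Y : Type*} [Group G] [TopologicalSpace G]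
    [IsTopologicalGroup G] [PolishSpace G]
    (d : G → G → ℝ) (hd : IsRightInvariantCompatibleMetric d)
    [TopologicalSpace Y] [PolishSpace Y] [MulAction G Y] [ContinuousSMul G Y]
    (O : Set Y) (hO : IsOpen O) (y : Y) (g₀ : G) (q₀ : ℚ)
    (hq₀ : q₀ ∈ Set.Ioo (0 : ℚ) 1) (h : fFn d O y g₀ < (q₀ : ℝ)) :
    ∃ (On Om : Set Y) (q₁ q₂ : ℚ),
      IsOpen On ∧ IsOpen Om ∧ 0 < q₂ ∧ q₂ < q₁ ∧ q₁ < q₀ ∧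
      g₀ • y ∈ On ∧
      closure Om ⊆ {z : Y | ∃ g : G, d 1 g⁻¹ < (q₀ : ℝ) ∧ z ∈ g • O} ∧
      ∀ (z : Y) (g h' : G),
        d 1 g < (q₁ : ℝ) + (q₂ : ℝ) → g • z ∈ On → d 1 h' < (q₁ : ℝ) → h' • z ∈ Om := by
  obtain ⟨hsymm, hzero, htri, hrinv, hbd, hbasis⟩ := hd
  have hdnn : ∀ g h : G, 0 ≤ d g h := by
    intro g h
    have h1 : d g g = 0 := (hzero g g).mpr rfl
    have h2 := htri g h g
    rw [h1, hsymm h g] at h2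
    linarith
  set w := g₀ • y with hw
  -- the set is nonempty
  set S := {g : G | g • w ∈ O} with hS
  have hq01 : (q₀ : ℝ) < 1 := by exact_mod_cast hq₀.2
  have hSne : S.Nonempty := by
    by_contra hne
    rw [fFn, if_neg hne] at h
    linarith
  -- extract g* with d 1 g* < q₀
  have hlt : sInf ((fun g => d 1 g) '' S) < (q₀ : ℝ) := by
    rwa [fFn, if_pos hSne] at h
  have hbdd : BddBelow ((fun g => d 1 g) '' S) := by
    refine ⟨0, ?_⟩
    rintro x ⟨g, -, rfl⟩
    exact hdnn 1 g
  obtain ⟨x, hxmem, hxlt⟩ := (csInf_lt_iff hbdd (hSne.image _)).mp hlt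
  obtain ⟨gs, hgs, rfl⟩ := hxmem
  -- W
  set W := {z : Y | ∃ g : G, d 1 g⁻¹ < (q₀ : ℝ) ∧ z ∈ g • O} with hW
  have hWopen : IsOpen W := by
    have : W = ⋃ g ∈ {g : G | d 1 g⁻¹ < (q₀:ℝ)}, g • O := by
      ext z; simp [hW]
    rw [this]
    exact isOpen_biUnion fun g _ => hO.smul g
  have hwW : w ∈ W := by
    refine ⟨gs⁻¹, ?_, ?_⟩
    · rwa [inv_inv]
    · exact Set.mem_smul_set.mpr ⟨gs • w, hgs, by simp⟩
  -- closed nbhd inside W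
  letI := TopologicalSpace.upgradeIsCompletelyMetrizable Y
  obtain ⟨C, hCnhds, hCclosed, hCW⟩ :=
    exists_mem_nhds_isClosed_subset (hWopen.mem_nhds hwW)
  set Om := interior C with hOm
  have hwOm : w ∈ Om := mem_interior_iff_mem_nhds.mpr hCnhds
  have hclOm : closure Om ⊆ W :=
    (closure_minimal interior_subset hCclosed).trans hCW
  -- continuity of the action at (1, w)
  have hcont : Continuous fun p : G × Y => p.1 • p.2 := continuous_smul
  have hpre : IsOpen ((fun p : G × Y => p.1 • p.2) ⁻¹' Om) :=
    isOpen_interior.preimage hcont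
  have hmem : ((1 : G), w) ∈ (fun p : G × Y => p.1 • p.2) ⁻¹' Om := by
    simpa using hwOm
  obtain ⟨U, V, hUopen, hVopen, hU1, hwV, hUV⟩ := isOpen_prod_iff.mp hpre 1 w hmem
  -- ε-ball inside U
  obtain ⟨ε, hε, hball⟩ := (hbasis 1).mem_iff.mp (hUopen.mem_nhds hU1)
  -- pick rationals
  have hpos : (0 : ℝ) < min (q₀ : ℝ) (ε / 3) := by
    have : (0:ℝ) < (q₀:ℝ) := by exact_mod_cast hq₀.1
    exact lt_min this (by linarith)
  obtain ⟨r, hr0, hrlt⟩ := exists_rat_btwn hpos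
  have hr0' : 0 < r := by exact_mod_cast hr0
  have hrq₀ : (r : ℝ) < (q₀ : ℝ) := hrlt.trans_le (min_le_left _ _)
  have hrε : (r : ℝ) < ε / 3 := hrlt.trans_le (min_le_right _ _)
  refine ⟨V, Om, r, r / 2, hVopen, isOpen_interior, by positivity, by linarith, ?_, hwV,
    hclOm, ?_⟩
  · exact_mod_cast hrq₀
  · intro z g h' hg hgz hh'
    have hcast : ((r / 2 : ℚ) : ℝ) = (r : ℝ) / 2 := by push_cast; ring
    rw [hcast] at hg
    have hdk : d 1 (h' * g⁻¹) < ε := by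
      have h1 : d 1 (h' * g⁻¹) = d g h' := by
        have := hrinv 1 (h' * g⁻¹) g
        simpa [mul_assoc] using this.symm
      have h2 : d g h' ≤ d g 1 + d 1 h' := htri g 1 h'
      rw [h1]
      rw [hsymm g 1] at h2
      have : (r:ℝ) + (r:ℝ)/2 + (r:ℝ) < ε := by linarith
      linarith
    have hkU : h' * g⁻¹ ∈ U := hball hdk
    have := hUV (Set.mk_mem_prod hkU hgz)
    simpa [smul_smul, mul_assoc] using this
end

section
/- (de Vries) Let G be a separable, locally compact, metrizable topological group. Then there exists a Polish space X with a continuous action of G such that for every Polish space Y with a continuous action of G there is an injective, continuous, G-equivariant map π : Y → X. -/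
/-- A Polish `G`-space: a Polish topological space equipped with a continuous
action of the topological group `G`. -/
structure PolishGSpace (G : Type*) [Group G] [TopologicalSpace G] where
  carrier : Type*
  [topology : TopologicalSpace carrier]
  polish : PolishSpace carrier
  smul : G → carrier → carrier
  one_smul : ∀ x, smul 1 x = x
  mul_smul : ∀ g h x, smul (g * h) x = smul g (smul h x)
  continuous_smul : Continuous fun p : G × carrier => smul p.1 p.2

attribute [instance] PolishGSpace.topology

open TopologicalSpace in
/-- (de Vries) Let `G` be a separable, locally compact, metrizable topological
group.  Then there is a Polish space `X` with a continuous `G`-action such that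
every Polish space `Y` with a continuous `G`-action admits an injective,
continuous, `G`-equivariant map `π : Y → X`. -/
theorem deVries_exists_continuously_universal_PolishGSpace
    (G : Type*) [Group G] [TopologicalSpace G] [IsTopologicalGroup G]
    [LocallyCompactSpace G] [TopologicalSpace.SeparableSpace G]
    [TopologicalSpace.MetrizableSpace G] :
    ∃ X : PolishGSpace G, ∀ Y : PolishGSpace G,
      ∃ π : Y.carrier → X.carrier,
        Function.Injective π ∧ Continuous π ∧
        ∀ (g : G) (y : Y.carrier), π (Y.smul g y) = X.smul g (π y) := by
  classical
  -- `G` is second countable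
  haveI : SecondCountableTopology G := by
    letI := TopologicalSpace.metrizableSpaceMetric G
    exact UniformSpace.secondCountable_of_separable G
  -- the model space `C(G, ℝ^ℕ)` is Polish
  haveI : TopologicalSpace.MetrizableSpace C(G, ℕ → ℝ) :=
    UniformSpace.metrizableSpace
  haveI : PolishSpace C(G, ℕ → ℝ) := inferInstance
  -- embed it into `BoundedContinuousFunction ℕ ℝ`, a type in universe 0
  obtain ⟨j, hj⟩ := TopologicalSpace.exists_embedding_l_infty C(G, ℕ → ℝ)
  set X0 : Set (BoundedContinuousFunction ℕ ℝ) := Set.range j with hX0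
  let h0 : C(G, ℕ → ℝ) ≃ₜ X0 := hj.toHomeomorph
  haveI : PolishSpace X0 := h0.symm.isClosedEmbedding.polishSpace
  haveI : PolishSpace (ULift X0) :=
    (Homeomorph.ulift (X := X0)).isClosedEmbedding.polishSpace
  let e : ULift X0 ≃ₜ C(G, ℕ → ℝ) := (Homeomorph.ulift (X := X0)).trans h0.symm
  -- right-translation action on `C(G, ℝ^ℕ)`
  let mr : G → C(G, G) := fun g => ⟨fun x => x * g, continuous_mul_right g⟩
  have hmr : Continuous mr := by
    have : Continuous fun p : G × G => p.2 * p.1 := by continuity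
    exact (ContinuousMap.curry ⟨fun p : G × G => p.2 * p.1, this⟩).continuous
  let Φ : G → C(G, ℕ → ℝ) → C(G, ℕ → ℝ) := fun g f => f.comp (mr g)
  have hΦ : Continuous fun p : G × C(G, ℕ → ℝ) => Φ p.1 p.2 := by
    exact ContinuousMap.continuous_comp'.comp ((hmr.comp continuous_fst).prodMk
      continuous_snd)
  refine ⟨⟨ULift X0, inferInstance, fun g x => e.symm (Φ g (e x)), ?_, ?_, ?_⟩, ?_⟩
  · intro x
    show e.symm (Φ 1 (e x)) = x
    have : Φ 1 (e x) = e x := by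
      apply ContinuousMap.ext; intro y; simp [Φ, mr]
    rw [this, e.symm_apply_apply]
  · intro g h x
    show e.symm (Φ (g * h) (e x)) = e.symm (Φ g (e (e.symm (Φ h (e x)))))
    rw [e.apply_symm_apply]
    have : Φ (g * h) (e x) = Φ g (Φ h (e x)) := by
      apply ContinuousMap.ext; intro y
      simp [Φ, mr, mul_assoc]
    rw [this]
  · exact e.symm.continuous.comp (hΦ.comp ((continuous_fst).prodMk
      (e.continuous.comp continuous_snd)))
  · intro Y
    haveI := Y.polish
    rcases isEmpty_or_nonempty Y.carrier with hY | hY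
    · exact ⟨fun y => hY.elim y, fun a => hY.elim a,
        continuous_iff_continuousAt.2 fun y => hY.elim y, fun g y => hY.elim y⟩
    -- an injective continuous map `e' : Y → ℝ^ℕ`
    letI := upgradeIsCompletelyMetrizable Y.carrier
    let u : ℕ → Y.carrier := TopologicalSpace.denseSeq Y.carrier
    have hu : DenseRange u := TopologicalSpace.denseRange_denseSeq Y.carrier
    let e' : Y.carrier → ℕ → ℝ := fun y n => dist y (u n)
    have he'c : Continuous e' :=
      continuous_pi fun n => (continuous_id.dist continuous_const)
    have he'i : Function.Injective e' := by
      intro y z hyz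
      have key : ∀ n, dist y (u n) = dist z (u n) := fun n => congrFun hyz n
      refine eq_of_forall_dist_le fun ε hε => ?_
      obtain ⟨n, hn⟩ := Metric.denseRange_iff.1 hu y (ε / 2) (by linarith)
      calc dist y z ≤ dist y (u n) + dist (u n) z := dist_triangle _ _ _
        _ = dist y (u n) + dist z (u n) := by rw [dist_comm (u n) z]
        _ = dist y (u n) + dist y (u n) := by rw [key n]
        _ ≤ ε / 2 + ε / 2 := by linarith [hn]
        _ = ε := by ring
    -- the orbit map
    have hΨ : Continuous fun p : Y.carrier × G => e' (Y.smul p.2 p.1) := by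
      exact he'c.comp (Y.continuous_smul.comp ((continuous_snd).prodMk continuous_fst))
    let F : C(Y.carrier, C(G, ℕ → ℝ)) :=
      ContinuousMap.curry ⟨fun p : Y.carrier × G => e' (Y.smul p.2 p.1), hΨ⟩
    refine ⟨fun y => e.symm (F y), ?_, e.symm.continuous.comp F.continuous, ?_⟩
    · intro y z hyz
      have hF : F y = F z := e.symm.injective hyz
      have h1 : e' (Y.smul 1 y) = e' (Y.smul 1 z) := by
        have := ContinuousMap.congr_fun hF 1
        simpa [F] using this
      rw [Y.one_smul, Y.one_smul] at h1
      exact he'i h1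
    · intro g y
      show e.symm (F (Y.smul g y)) = e.symm (Φ g (e (e.symm (F y))))
      rw [e.apply_symm_apply]
      congr 1
      apply ContinuousMap.ext; intro x
      simp only [F, Φ, ContinuousMap.comp_apply, ContinuousMap.curry_apply,
        ContinuousMap.coe_mk, mr]
      rw [← Y.mul_smul]
end
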